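/- Consider the trace regression model Yᵢ = tr(XᵢᵀA₀) + ξᵢ. On the event {λ ≥ 3‖M₁ + M₂‖∞}, the nuclear-norm penalized estimator Â^λ satisfies the cone condition ‖𝒫_{A₀}^⊥(Â^λ − A₀)‖₁ ≤ 5·‖𝒫_{A₀}(Â^λ − A₀)‖₁. -/

import Mathlib

open MeasureTheory ProbabilityTheory Matrix Real

noncomputable section

namespace MC

instance matMeasurableSpace {m n : Type*} : MeasurableSpace (Matrix m n ℝ) :=
  inferInstanceAs (MeasurableSpace (m → n → ℝ))

/-- Trace inner product `⟨A,B⟩ = tr(Aᵀ B)`. -/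
def mip {m₁ m₂ : ℕ} (A B : Matrix (Fin m₁) (Fin m₂) ℝ) : ℝ := (Aᵀ * B).trace

/-- Frobenius norm `‖A‖₂`. -/
def frob {m₁ m₂ : ℕ} (A : Matrix (Fin m₁) (Fin m₂) ℝ) : ℝ :=
  Real.sqrt (∑ i, ∑ j, (A i j) ^ 2)

/-- Euclidean norm of a vector. -/
def evnorm {m : ℕ} (v : Fin m → ℝ) : ℝ := Real.sqrt (∑ i, (v i) ^ 2)

/-- Spectral norm `‖A‖_∞` (largest singular value), as the `ℓ₂ → ℓ₂` operator norm. -/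
def spec {m₁ m₂ : ℕ} (A : Matrix (Fin m₁) (Fin m₂) ℝ) : ℝ :=
  sSup {r | ∃ x : Fin m₂ → ℝ, evnorm x ≤ 1 ∧ r = evnorm (A.mulVec x)}

/-- Nuclear norm `‖A‖₁` (sum of singular values), via trace duality with the spectral norm. -/
def nuc {m₁ m₂ : ℕ} (A : Matrix (Fin m₁) (Fin m₂) ℝ) : ℝ :=
  sSup {r | ∃ B : Matrix (Fin m₁) (Fin m₂) ℝ, spec B ≤ 1 ∧ r = mip A B}

/-- The matrix of the orthogonal projection onto a subspace of Euclidean space. -/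
def projMat {m : ℕ} (S : Submodule ℝ (EuclideanSpace ℝ (Fin m))) :
    Matrix (Fin m) (Fin m) ℝ :=
  fun i j => (Submodule.orthogonalProjection S (EuclideanSpace.single j 1) : EuclideanSpace ℝ (Fin m)) i

/-- Column space of `A`, i.e. the span `S₁(A)` of the left singular vectors of `A`. -/
def colSpace {m₁ m₂ : ℕ} (A : Matrix (Fin m₁) (Fin m₂) ℝ) :
    Submodule ℝ (EuclideanSpace ℝ (Fin m₁)) :=
  LinearMap.range (Matrix.toEuclideanLin A)

/-- Row space of `A`, i.e. the span `S₂(A)` of the right singular vectors of `A`. -/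
def rowSpace {m₁ m₂ : ℕ} (A : Matrix (Fin m₁) (Fin m₂) ℝ) :
    Submodule ℝ (EuclideanSpace ℝ (Fin m₂)) :=
  LinearMap.range (Matrix.toEuclideanLin Aᵀ)

/-- `𝒫_A^⊥(B) = P_{S₁(A)^⊥} B P_{S₂(A)^⊥}`. -/
def calPperp {m₁ m₂ : ℕ} (A B : Matrix (Fin m₁) (Fin m₂) ℝ) : Matrix (Fin m₁) (Fin m₂) ℝ :=
  projMat (colSpace A)ᗮ * B * projMat (rowSpace A)ᗮ

/-- `𝒫_A(B) = B - P_{S₁(A)^⊥} B P_{S₂(A)^⊥}`. -/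
def calP {m₁ m₂ : ℕ} (A B : Matrix (Fin m₁) (Fin m₂) ℝ) : Matrix (Fin m₁) (Fin m₂) ℝ :=
  B - calPperp A B

/-- Entrywise expectation of a random matrix. -/
def mE {Ω : Type*} [MeasurableSpace Ω] {k l : ℕ} (μ : Measure Ω)
    (Z : Ω → Matrix (Fin k) (Fin l) ℝ) : Matrix (Fin k) (Fin l) ℝ :=
  fun i j => ∫ ω, Z ω i j ∂μ

/-- `⟨A,B⟩_{L₂(Π)} = (1/n) Σᵢ E[⟨A,Xᵢ⟩⟨B,Xᵢ⟩]`. -/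
def ipL2 {Ω : Type*} [MeasurableSpace Ω] {m₁ m₂ n : ℕ} (μ : Measure Ω)
    (X : Fin n → Ω → Matrix (Fin m₁) (Fin m₂) ℝ) (A B : Matrix (Fin m₁) (Fin m₂) ℝ) : ℝ :=
  (1 / n) * ∑ i, ∫ ω, mip A (X i ω) * mip B (X i ω) ∂μ

/-- `‖A‖²_{L₂(Π)} = (1/n) Σᵢ E[⟨A,Xᵢ⟩²]`. -/
def nl2sq {Ω : Type*} [MeasurableSpace Ω] {m₁ m₂ n : ℕ} (μ : Measure Ω)
    (X : Fin n → Ω → Matrix (Fin m₁) (Fin m₂) ℝ) (A : Matrix (Fin m₁) (Fin m₂) ℝ) : ℝ :=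
  ipL2 μ X A A

/-- `κ₁(Π) = inf{‖B‖_{L₂(Π)} : ‖B‖₂ = 1, rank(B) ≤ 1}`. -/
def kappa1 {Ω : Type*} [MeasurableSpace Ω] {m₁ m₂ n : ℕ} (μ : Measure Ω)
    (X : Fin n → Ω → Matrix (Fin m₁) (Fin m₂) ℝ) : ℝ :=
  sInf {r | ∃ B : Matrix (Fin m₁) (Fin m₂) ℝ,
    frob B = 1 ∧ B.rank ≤ 1 ∧ r = Real.sqrt (nl2sq μ X B)}

/-- The coherence `ρ(Π) = sup{|⟨A,B⟩_{L₂(Π)}| / (‖A‖₁‖B‖₁) : A,B ≠ 0, ⟨A,B⟩ = 0}`. -/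
def rho {Ω : Type*} [MeasurableSpace Ω] {m₁ m₂ n : ℕ} (μ : Measure Ω)
    (X : Fin n → Ω → Matrix (Fin m₁) (Fin m₂) ℝ) : ℝ :=
  sSup {r | ∃ A B : Matrix (Fin m₁) (Fin m₂) ℝ, A ≠ 0 ∧ B ≠ 0 ∧ mip A B = 0 ∧
    r = |ipL2 μ X A B| / (nuc A * nuc B)}

/-- The observations `Yᵢ = tr(Xᵢᵀ A₀) + ξᵢ` of the trace regression model. -/
def Yobs {Ω : Type*} {m₁ m₂ n : ℕ} (X : Fin n → Ω → Matrix (Fin m₁) (Fin m₂) ℝ)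
    (ξ : Fin n → Ω → ℝ) (A₀ : Matrix (Fin m₁) (Fin m₂) ℝ) (i : Fin n) (ω : Ω) : ℝ :=
  mip A₀ (X i ω) + ξ i ω

/-- The objective function `‖A‖²_{L₂(Π)} - ⟨(2/n) Σᵢ Yᵢ Xᵢ, A⟩ + λ ‖A‖₁` of the
nuclear-norm penalized estimator, at a realization `ω`. -/
def obj {Ω : Type*} [MeasurableSpace Ω] {m₁ m₂ n : ℕ} (μ : Measure Ω)
    (X : Fin n → Ω → Matrix (Fin m₁) (Fin m₂) ℝ) (ξ : Fin n → Ω → ℝ)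
    (A₀ : Matrix (Fin m₁) (Fin m₂) ℝ) (lam : ℝ) (ω : Ω)
    (A : Matrix (Fin m₁) (Fin m₂) ℝ) : ℝ :=
  nl2sq μ X A - mip ((2 / (n : ℝ)) • ∑ i, Yobs X ξ A₀ i ω • X i ω) A + lam * nuc A

/-- The stochastic error matrix `M₁ = (1/n) Σᵢ ξᵢ Xᵢ`. -/
def M1 {Ω : Type*} {m₁ m₂ n : ℕ} (X : Fin n → Ω → Matrix (Fin m₁) (Fin m₂) ℝ)
    (ξ : Fin n → Ω → ℝ) (ω : Ω) : Matrix (Fin m₁) (Fin m₂) ℝ :=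
  (1 / (n : ℝ)) • ∑ i, ξ i ω • X i ω

/-- The stochastic error matrix `M₂ = (1/n) Σᵢ (⟨A₀,Xᵢ⟩Xᵢ - E[⟨A₀,Xᵢ⟩Xᵢ])`. -/
def M2 {Ω : Type*} [MeasurableSpace Ω] {m₁ m₂ n : ℕ} (μ : Measure Ω)
    (X : Fin n → Ω → Matrix (Fin m₁) (Fin m₂) ℝ) (A₀ : Matrix (Fin m₁) (Fin m₂) ℝ)
    (ω : Ω) : Matrix (Fin m₁) (Fin m₂) ℝ :=
  (1 / (n : ℝ)) • ∑ i, (mip A₀ (X i ω) • X i ω - mE μ (fun ω' => mip A₀ (X i ω') • X i ω'))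

/-! ### Auxiliary development -/

section Aux

variable {m₁ m₂ m k : ℕ}

lemma mip_eq_sum (A B : Matrix (Fin m₁) (Fin m₂) ℝ) :
    mip A B = ∑ i, ∑ j, A i j * B i j := by
  unfold mip Matrix.trace
  simp only [Matrix.diag, Matrix.mul_apply, Matrix.transpose_apply]
  rw [Finset.sum_comm]


lemma mip_comm (A B : Matrix (Fin m₁) (Fin m₂) ℝ) : mip A B = mip B A := by
  simp only [mip_eq_sum]; congr 1; funext i; congr 1; funext j; ring

lemma mip_add_left (A B C : Matrix (Fin m₁) (Fin m₂) ℝ) :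
    mip (A + B) C = mip A C + mip B C := by
  simp [mip_eq_sum, Matrix.add_apply, add_mul, Finset.sum_add_distrib]

lemma mip_add_right (A B C : Matrix (Fin m₁) (Fin m₂) ℝ) :
    mip A (B + C) = mip A B + mip A C := by
  rw [mip_comm, mip_add_left, mip_comm B A, mip_comm C A]

lemma mip_smul_left (c : ℝ) (A B : Matrix (Fin m₁) (Fin m₂) ℝ) :
    mip (c • A) B = c * mip A B := by
  simp [mip_eq_sum, Matrix.smul_apply, smul_eq_mul, Finset.mul_sum, mul_assoc]

lemma mip_smul_right (c : ℝ) (A B : Matrix (Fin m₁) (Fin m₂) ℝ) :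
    mip A (c • B) = c * mip A B := by
  rw [mip_comm, mip_smul_left, mip_comm B A]

lemma mip_zero_right (A : Matrix (Fin m₁) (Fin m₂) ℝ) : mip A 0 = 0 := by
  simp [mip_eq_sum]

lemma mip_zero_left (A : Matrix (Fin m₁) (Fin m₂) ℝ) : mip 0 A = 0 := by
  simp [mip_eq_sum]

lemma mip_neg_left (A B : Matrix (Fin m₁) (Fin m₂) ℝ) : mip (-A) B = -mip A B := by
  simp [mip_eq_sum, Matrix.neg_apply, Finset.sum_neg_distrib]

lemma mip_neg_right (A B : Matrix (Fin m₁) (Fin m₂) ℝ) : mip A (-B) = -mip A B := by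
  rw [mip_comm, mip_neg_left, mip_comm B A]

lemma mip_sub_left (A B C : Matrix (Fin m₁) (Fin m₂) ℝ) :
    mip (A - B) C = mip A C - mip B C := by
  rw [sub_eq_add_neg, mip_add_left, mip_neg_left, sub_eq_add_neg]

lemma mip_sub_right (A B C : Matrix (Fin m₁) (Fin m₂) ℝ) :
    mip A (B - C) = mip A B - mip A C := by
  rw [mip_comm, mip_sub_left, mip_comm B A, mip_comm C A]

lemma mip_sum_left {ι : Type*} (s : Finset ι) (A : ι → Matrix (Fin m₁) (Fin m₂) ℝ)
    (B : Matrix (Fin m₁) (Fin m₂) ℝ) :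
    mip (∑ i ∈ s, A i) B = ∑ i ∈ s, mip (A i) B := by
  classical
  induction s using Finset.induction_on with
  | empty => simp [mip_zero_left]
  | insert _ _ h ih => simp [Finset.sum_insert h, mip_add_left, ih]

lemma mip_mul_left (P : Matrix (Fin m₁) (Fin m₁) ℝ) (A C : Matrix (Fin m₁) (Fin m₂) ℝ) :
    mip (P * A) C = mip A (Pᵀ * C) := by
  unfold mip
  rw [Matrix.transpose_mul, Matrix.mul_assoc]

lemma mip_mul_right (Q : Matrix (Fin m₂) (Fin m₂) ℝ) (A C : Matrix (Fin m₁) (Fin m₂) ℝ) :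
    mip (A * Q) C = mip A (C * Qᵀ) := by
  unfold mip
  rw [Matrix.transpose_mul, Matrix.trace_mul_comm, ← Matrix.mul_assoc, Matrix.trace_mul_comm]

lemma mip_stdBasisMatrix (i : Fin m₁) (j : Fin m₂) (A : Matrix (Fin m₁) (Fin m₂) ℝ) :
    mip (Matrix.single i j 1) A = A i j := by
  rw [mip_eq_sum]
  rw [Finset.sum_eq_single i]
  · rw [Finset.sum_eq_single j]
    · simp [Matrix.single]
    · intro b _ hb; simp [Matrix.single, hb, Ne.symm hb]
    · simp
  · intro a _ ha; apply Finset.sum_eq_zero; intro b _; simp [Matrix.single, Ne.symm ha]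
  · simp

end Aux
section Aux2

variable {m₁ m₂ m : ℕ}

/-- The identity between `Fin m → ℝ` and `EuclideanSpace ℝ (Fin m)`. -/
def en {m : ℕ} (x : Fin m → ℝ) : EuclideanSpace ℝ (Fin m) :=
  (WithLp.linearEquiv 2 ℝ (Fin m → ℝ)).symm x

lemma en_apply (x : Fin m → ℝ) (i : Fin m) : en x i = x i := rfl

lemma en_add (x y : Fin m → ℝ) : en (x + y) = en x + en y := by
  simp [en, map_add]

lemma evnorm_eq (x : Fin m → ℝ) : evnorm x = ‖en x‖ := by
  rw [EuclideanSpace.norm_eq]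
  unfold evnorm
  congr 1
  apply Finset.sum_congr rfl
  intro i _
  rw [en_apply, Real.norm_eq_abs, sq_abs]

lemma evnorm_nonneg (x : Fin m → ℝ) : 0 ≤ evnorm x := Real.sqrt_nonneg _

lemma evnorm_zero : evnorm (0 : Fin m → ℝ) = 0 := by simp [evnorm]

lemma evnorm_neg (x : Fin m → ℝ) : evnorm (-x) = evnorm x := by simp [evnorm]

lemma evnorm_smul (c : ℝ) (x : Fin m → ℝ) : evnorm (c • x) = |c| * evnorm x := by
  unfold evnorm
  rw [← Real.sqrt_sq_eq_abs, ← Real.sqrt_mul (sq_nonneg c)]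
  congr 1
  rw [Finset.mul_sum]
  apply Finset.sum_congr rfl
  intro i _
  simp [Pi.smul_apply, smul_eq_mul, mul_pow]

lemma evnorm_single (j : Fin m) : evnorm (Pi.single j (1:ℝ)) = 1 := by
  unfold evnorm
  have h : (∑ i : Fin m, ((Pi.single j (1:ℝ) : Fin m → ℝ) i)^2) = 1 := by
    rw [Finset.sum_eq_single j]
    · simp
    · intro b _ hb; simp [Pi.single_eq_of_ne hb]
    · simp
  rw [h, Real.sqrt_one]

lemma abs_apply_le_evnorm (x : Fin m → ℝ) (i : Fin m) : |x i| ≤ evnorm x := by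
  rw [← Real.sqrt_sq_eq_abs]
  apply Real.sqrt_le_sqrt
  exact Finset.single_le_sum (f := fun i => (x i)^2) (fun j _ => sq_nonneg _) (Finset.mem_univ i)

lemma specSet_nonempty (A : Matrix (Fin m₁) (Fin m₂) ℝ) :
    {r | ∃ x : Fin m₂ → ℝ, evnorm x ≤ 1 ∧ r = evnorm (A.mulVec x)}.Nonempty :=
  ⟨evnorm (A.mulVec 0), 0, by simp [evnorm_zero], rfl⟩

lemma specSet_bddAbove (A : Matrix (Fin m₁) (Fin m₂) ℝ) :
    BddAbove {r | ∃ x : Fin m₂ → ℝ, evnorm x ≤ 1 ∧ r = evnorm (A.mulVec x)} := by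
  refine ⟨Real.sqrt (∑ i, ∑ j, (A i j)^2), ?_⟩
  rintro r ⟨x, hx, rfl⟩
  unfold evnorm
  apply Real.sqrt_le_sqrt
  calc ∑ i, (A.mulVec x i)^2 ≤ ∑ i, (∑ j, (A i j)^2) * ∑ j, (x j)^2 := by
        apply Finset.sum_le_sum
        intro i _
        have h := Finset.sum_mul_sq_le_sq_mul_sq Finset.univ (fun j => A i j) x
        simpa [Matrix.mulVec, dotProduct] using h
    _ = (∑ i, ∑ j, (A i j)^2) * ∑ j, (x j)^2 := by rw [Finset.sum_mul]
    _ ≤ (∑ i, ∑ j, (A i j)^2) * 1 := by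
        apply mul_le_mul_of_nonneg_left _ (by positivity)
        have h1 : Real.sqrt (∑ j, (x j)^2) ≤ 1 := hx
        have := Real.sqrt_le_sqrt (le_of_eq (rfl : (∑ j, (x j)^2) = _))
        nlinarith [Real.sq_sqrt (show (0:ℝ) ≤ ∑ j, (x j)^2 by positivity),
          Real.sqrt_nonneg (∑ j, (x j)^2)]
    _ = ∑ i, ∑ j, (A i j)^2 := mul_one _

lemma spec_nonneg (A : Matrix (Fin m₁) (Fin m₂) ℝ) : 0 ≤ spec A := by
  have : (0:ℝ) ∈ {r | ∃ x : Fin m₂ → ℝ, evnorm x ≤ 1 ∧ r = evnorm (A.mulVec x)} :=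
    ⟨0, by simp [evnorm_zero], by simp [Matrix.mulVec_zero, evnorm_zero]⟩
  exact le_csSup (specSet_bddAbove A) this

lemma spec_le {A : Matrix (Fin m₁) (Fin m₂) ℝ} {c : ℝ}
    (h : ∀ x : Fin m₂ → ℝ, evnorm x ≤ 1 → evnorm (A.mulVec x) ≤ c) : spec A ≤ c := by
  apply csSup_le (specSet_nonempty A)
  rintro r ⟨x, hx, rfl⟩
  exact h x hx

lemma evnorm_pos_of_ne_zero {x : Fin m → ℝ} (hx : x ≠ 0) : 0 < evnorm x := by
  have : ∃ i, x i ≠ 0 := by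
    by_contra h
    push_neg at h
    exact hx (funext h)
  obtain ⟨i, hi⟩ := this
  have h1 : 0 < |x i| := abs_pos.mpr hi
  exact lt_of_lt_of_le h1 (abs_apply_le_evnorm x i)

lemma evnorm_mulVec_le (A : Matrix (Fin m₁) (Fin m₂) ℝ) (x : Fin m₂ → ℝ) :
    evnorm (A.mulVec x) ≤ spec A * evnorm x := by
  by_cases hx : x = 0
  · simp [hx, Matrix.mulVec_zero, evnorm_zero]
  · have hpos := evnorm_pos_of_ne_zero hx
    set c := (evnorm x)⁻¹ with hc
    have hc0 : 0 < c := inv_pos.mpr hpos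
    have hy : evnorm (c • x) ≤ 1 := by
      rw [evnorm_smul, abs_of_pos hc0, hc, inv_mul_cancel₀ (ne_of_gt hpos)]
    have hmem : evnorm (A.mulVec (c • x)) ≤ spec A :=
      le_csSup (specSet_bddAbove A) ⟨c • x, hy, rfl⟩
    rw [Matrix.mulVec_smul, evnorm_smul, abs_of_pos hc0] at hmem
    calc evnorm (A.mulVec x) = evnorm x * (c * evnorm (A.mulVec x)) := by
          rw [hc, ← mul_assoc, mul_inv_cancel₀ (ne_of_gt hpos), one_mul]
      _ ≤ evnorm x * spec A := by
          apply mul_le_mul_of_nonneg_left hmem (le_of_lt hpos)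
      _ = spec A * evnorm x := mul_comm _ _

lemma spec_eq_zero_imp {A : Matrix (Fin m₁) (Fin m₂) ℝ} (h : spec A ≤ 0) : A = 0 := by
  ext i j
  have h1 : evnorm (A.mulVec (Pi.single j 1)) ≤ spec A * evnorm (Pi.single j (1:ℝ)) :=
    evnorm_mulVec_le A _
  rw [evnorm_single] at h1
  have h2 : evnorm (A.mulVec (Pi.single j 1)) ≤ 0 := by
    calc evnorm (A.mulVec (Pi.single j 1)) ≤ spec A * 1 := h1
      _ ≤ 0 := by linarith
  have h3 : |A.mulVec (Pi.single j 1) i| ≤ 0 :=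
    le_trans (abs_apply_le_evnorm _ i) h2
  have h4 : A.mulVec (Pi.single j 1) i = 0 := abs_nonpos_iff.mp h3
  rw [Matrix.mulVec_single] at h4
  simpa using h4

end Aux2
section Aux3

variable {m₁ m₂ m : ℕ}

lemma spec_zero : spec (0 : Matrix (Fin m₁) (Fin m₂) ℝ) ≤ 1 := by
  apply spec_le
  intro x _
  simp [Matrix.zero_mulVec, evnorm_zero]

lemma nucSet_nonempty (A : Matrix (Fin m₁) (Fin m₂) ℝ) :
    {r | ∃ B : Matrix (Fin m₁) (Fin m₂) ℝ, spec B ≤ 1 ∧ r = mip A B}.Nonempty :=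
  ⟨mip A 0, 0, spec_zero, rfl⟩

lemma abs_entry_le_spec (B : Matrix (Fin m₁) (Fin m₂) ℝ) (i : Fin m₁) (j : Fin m₂) :
    |B i j| ≤ spec B := by
  have h1 := evnorm_mulVec_le B (Pi.single j 1)
  rw [evnorm_single, mul_one] at h1
  have h2 := abs_apply_le_evnorm (B.mulVec (Pi.single j 1)) i
  have h3 : B.mulVec (Pi.single j 1) i = B i j := by
    rw [Matrix.mulVec_single]; exact mul_one _
  rw [h3] at h2
  exact le_trans h2 h1

lemma nucSet_bddAbove (A : Matrix (Fin m₁) (Fin m₂) ℝ) :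
    BddAbove {r | ∃ B : Matrix (Fin m₁) (Fin m₂) ℝ, spec B ≤ 1 ∧ r = mip A B} := by
  refine ⟨∑ i, ∑ j, |A i j|, ?_⟩
  rintro r ⟨B, hB, rfl⟩
  rw [mip_eq_sum]
  apply Finset.sum_le_sum
  intro i _
  apply Finset.sum_le_sum
  intro j _
  calc A i j * B i j ≤ |A i j * B i j| := le_abs_self _
    _ = |A i j| * |B i j| := abs_mul _ _
    _ ≤ |A i j| * 1 := by
        apply mul_le_mul_of_nonneg_left _ (abs_nonneg _)
        exact le_trans (abs_entry_le_spec B i j) hB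
    _ = |A i j| := mul_one _

lemma mip_le_nuc {A B : Matrix (Fin m₁) (Fin m₂) ℝ} (hB : spec B ≤ 1) :
    mip A B ≤ nuc A :=
  le_csSup (nucSet_bddAbove A) ⟨B, hB, rfl⟩

lemma nuc_le {A : Matrix (Fin m₁) (Fin m₂) ℝ} {c : ℝ}
    (h : ∀ B : Matrix (Fin m₁) (Fin m₂) ℝ, spec B ≤ 1 → mip A B ≤ c) : nuc A ≤ c := by
  apply csSup_le (nucSet_nonempty A)
  rintro r ⟨B, hB, rfl⟩
  exact h B hB

lemma nuc_nonneg (A : Matrix (Fin m₁) (Fin m₂) ℝ) : 0 ≤ nuc A := by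
  have := mip_le_nuc (A := A) spec_zero
  rwa [mip_zero_right] at this

lemma nuc_add_le (A B : Matrix (Fin m₁) (Fin m₂) ℝ) : nuc (A + B) ≤ nuc A + nuc B := by
  apply nuc_le
  intro C hC
  rw [mip_add_left]
  exact add_le_add (mip_le_nuc hC) (mip_le_nuc hC)

lemma spec_neg (B : Matrix (Fin m₁) (Fin m₂) ℝ) : spec (-B) ≤ spec B := by
  apply spec_le
  intro x hx
  rw [Matrix.neg_mulVec, evnorm_neg]
  calc evnorm (B.mulVec x) ≤ spec B * evnorm x := evnorm_mulVec_le B x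
    _ ≤ spec B * 1 := mul_le_mul_of_nonneg_left hx (spec_nonneg B)
    _ = spec B := mul_one _

lemma nuc_neg (A : Matrix (Fin m₁) (Fin m₂) ℝ) : nuc (-A) = nuc A := by
  have key : ∀ C : Matrix (Fin m₁) (Fin m₂) ℝ, nuc (-C) ≤ nuc C := by
    intro C
    apply nuc_le
    intro B hB
    have h1 : spec (-B) ≤ 1 := le_trans (spec_neg B) hB
    have := mip_le_nuc (A := C) h1
    rw [mip_neg_right] at this
    rw [mip_neg_left]
    linarith
  have h1 := key A
  have h2 := key (-A)
  rw [neg_neg] at h2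
  linarith

lemma mip_le_spec_mul_nuc (A M : Matrix (Fin m₁) (Fin m₂) ℝ) :
    mip M A ≤ spec M * nuc A := by
  by_cases hM : spec M ≤ 0
  · rw [spec_eq_zero_imp hM, mip_zero_left]
    have : spec (0 : Matrix (Fin m₁) (Fin m₂) ℝ) = 0 :=
      le_antisymm (by rwa [spec_eq_zero_imp hM] at hM) (spec_nonneg _)
    rw [this, zero_mul]
  · push_neg at hM
    set C : Matrix (Fin m₁) (Fin m₂) ℝ := (spec M)⁻¹ • M with hC
    have hspecC : spec C ≤ 1 := by
      apply spec_le
      intro x hx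
      rw [hC, Matrix.smul_mulVec, evnorm_smul, abs_of_pos (inv_pos.mpr hM)]
      calc (spec M)⁻¹ * evnorm (M.mulVec x) ≤ (spec M)⁻¹ * (spec M * evnorm x) := by
            apply mul_le_mul_of_nonneg_left (evnorm_mulVec_le M x) (le_of_lt (inv_pos.mpr hM))
        _ = evnorm x := by field_simp
        _ ≤ 1 := hx
    have hMC : M = spec M • C := by
      rw [hC, smul_smul, mul_inv_cancel₀ (ne_of_gt hM), one_smul]
    calc mip M A = mip A M := mip_comm _ _
      _ = spec M * mip A C := by conv_lhs => rw [hMC, mip_smul_right]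
      _ ≤ spec M * nuc A := mul_le_mul_of_nonneg_left (mip_le_nuc hspecC) (le_of_lt hM)

lemma neg_nuc_le_mip (A M : Matrix (Fin m₁) (Fin m₂) ℝ) (hM : spec M ≤ 1) :
    -nuc A ≤ mip A M := by
  have h := mip_le_nuc (A := -A) hM
  rw [mip_neg_left, nuc_neg] at h
  linarith

end Aux3
section Aux4

variable {m₁ m₂ m k : ℕ}

lemma el_en (x : Fin m → ℝ) : (WithLp.linearEquiv 2 ℝ (Fin m → ℝ)) (en x) = x := by
  simp [en]

lemma en_injective : Function.Injective (en (m := m)) :=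
  (WithLp.linearEquiv 2 ℝ (Fin m → ℝ)).symm.injective

lemma en_sub (x y : Fin m → ℝ) : en (x - y) = en x - en y := by simp [en, map_sub]

lemma en_sum_single (x : Fin m → ℝ) :
    en x = ∑ j, x j • EuclideanSpace.single j (1:ℝ) := by
  apply (WithLp.linearEquiv 2 ℝ (Fin m → ℝ)).injective
  rw [el_en, map_sum]
  funext i
  rw [Finset.sum_apply]
  simp only [_root_.map_smul]
  have h : ∀ j : Fin m, (WithLp.linearEquiv 2 ℝ (Fin m → ℝ)) (EuclideanSpace.single j (1:ℝ))
      = Pi.single j (1:ℝ) := by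
    intro j
    rw [WithLp.linearEquiv_apply]; exact EuclideanSpace.ofLp_single j 1
  simp only [h]
  simp [Pi.single_apply]

lemma en_projMat (S : Submodule ℝ (EuclideanSpace ℝ (Fin m))) (x : Fin m → ℝ) :
    en (projMat S *ᵥ x) = ((Submodule.orthogonalProjection S (en x) : EuclideanSpace ℝ (Fin m))) := by
  apply (WithLp.linearEquiv 2 ℝ (Fin m → ℝ)).injective
  rw [el_en]
  funext i
  have hrhs : (Submodule.orthogonalProjection S (en x) : EuclideanSpace ℝ (Fin m))
      = ∑ j, x j • (Submodule.orthogonalProjection S (EuclideanSpace.single j (1:ℝ)) :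
        EuclideanSpace ℝ (Fin m)) := by
    conv_lhs => rw [en_sum_single, map_sum]
    simp only [_root_.map_smul, Submodule.coe_sum, Submodule.coe_smul]
  rw [hrhs, map_sum]
  rw [Finset.sum_apply]
  simp only [_root_.map_smul, Pi.smul_apply, smul_eq_mul]
  show (projMat S *ᵥ x) i = _
  unfold Matrix.mulVec dotProduct projMat
  apply Finset.sum_congr rfl
  intro j _
  rw [WithLp.linearEquiv_apply]
  show _ = x j * (Submodule.orthogonalProjection S (EuclideanSpace.single j (1:ℝ)) :
    EuclideanSpace ℝ (Fin m)) i
  ring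

lemma en_projMat_mem (S : Submodule ℝ (EuclideanSpace ℝ (Fin m))) (x : Fin m → ℝ) :
    en (projMat S *ᵥ x) ∈ S := by
  rw [en_projMat]; exact SetLike.coe_mem _

lemma evnorm_projMat_le (S : Submodule ℝ (EuclideanSpace ℝ (Fin m))) (x : Fin m → ℝ) :
    evnorm (projMat S *ᵥ x) ≤ evnorm x := by
  rw [evnorm_eq, evnorm_eq, en_projMat]
  rw [← Submodule.coe_norm]
  calc ‖Submodule.orthogonalProjection S (en x)‖ ≤ ‖Submodule.orthogonalProjection S‖ * ‖en x‖ :=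
        (Submodule.orthogonalProjection S).le_opNorm (en x)
    _ ≤ 1 * ‖en x‖ :=
        mul_le_mul_of_nonneg_right (Submodule.orthogonalProjection_norm_le S) (norm_nonneg _)
    _ = ‖en x‖ := one_mul _

lemma evnorm_pyth {S : Submodule ℝ (EuclideanSpace ℝ (Fin m))} {u w : Fin m → ℝ}
    (hu : en u ∈ S) (hw : en w ∈ Sᗮ) :
    evnorm (u + w) ^ 2 = evnorm u ^ 2 + evnorm w ^ 2 := by
  rw [evnorm_eq, evnorm_eq, evnorm_eq, en_add, norm_add_sq_real,
    Submodule.inner_right_of_mem_orthogonal hu hw]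
  ring

lemma evnorm_proj_split (S : Submodule ℝ (EuclideanSpace ℝ (Fin m))) (x : Fin m → ℝ) :
    evnorm (projMat S *ᵥ x) ^ 2 + evnorm (projMat Sᗮ *ᵥ x) ^ 2 = evnorm x ^ 2 := by
  have hadd : projMat S *ᵥ x + projMat Sᗮ *ᵥ x = x := by
    apply en_injective
    rw [en_add, en_projMat, en_projMat]
    exact Submodule.starProjection_add_starProjection_orthogonal (en x)
  have := evnorm_pyth (en_projMat_mem S x) (en_projMat_mem Sᗮ x)
  rw [hadd] at this
  linarith

lemma matrix_ext_mulVec {M N : Matrix (Fin m) (Fin k) ℝ}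
    (h : ∀ x, M *ᵥ x = N *ᵥ x) : M = N := by
  ext i j
  have h1 := congrFun (h (Pi.single j 1)) i
  rw [Matrix.mulVec_single, Matrix.mulVec_single] at h1
  simpa using h1

lemma projMat_idem (S : Submodule ℝ (EuclideanSpace ℝ (Fin m))) :
    projMat S * projMat S = projMat S := by
  apply matrix_ext_mulVec
  intro x
  rw [← Matrix.mulVec_mulVec]
  apply en_injective
  rw [en_projMat, en_projMat]
  congr 1
  exact Submodule.orthogonalProjection_mem_subspace_eq_self _

lemma projMat_orthogonal (S : Submodule ℝ (EuclideanSpace ℝ (Fin m))) :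
    projMat Sᗮ = 1 - projMat S := by
  apply matrix_ext_mulVec
  intro x
  rw [Matrix.sub_mulVec, Matrix.one_mulVec]
  apply en_injective
  rw [en_projMat, en_sub, en_projMat]
  have : (Submodule.orthogonalProjection S (en x) : EuclideanSpace ℝ (Fin m))
      + (Submodule.orthogonalProjection Sᗮ (en x) : EuclideanSpace ℝ (Fin m)) = en x :=
    Submodule.starProjection_add_starProjection_orthogonal (en x)
  linear_combination (norm := module) this

lemma projMat_transpose (S : Submodule ℝ (EuclideanSpace ℝ (Fin m))) :
    (projMat S)ᵀ = projMat S := by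
  ext i j
  show projMat S j i = projMat S i j
  unfold projMat
  have key : ∀ a b : Fin m,
      (Submodule.orthogonalProjection S (EuclideanSpace.single b (1:ℝ)) : EuclideanSpace ℝ (Fin m)) a
      = inner (𝕜 := ℝ)
        ((Submodule.orthogonalProjection S (EuclideanSpace.single b (1:ℝ)) : EuclideanSpace ℝ (Fin m)))
        (EuclideanSpace.single a (1:ℝ)) := by
    intro a b
    rw [EuclideanSpace.inner_single_right]
    simp
  rw [key, key]
  rw [show ∀ u v : EuclideanSpace ℝ (Fin m), inner ℝ ((Submodule.orthogonalProjection S u : EuclideanSpace ℝ (Fin m))) v = inner ℝ u (Submodule.orthogonalProjection S v : EuclideanSpace ℝ (Fin m)) from fun u v => Submodule.inner_starProjection_left_eq_right (K := S) u v]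
  exact real_inner_comm _ _

lemma en_mulVec_mem_colSpace (A : Matrix (Fin m₁) (Fin m₂) ℝ) (x : Fin m₂ → ℝ) :
    en (A *ᵥ x) ∈ colSpace A := by
  refine ⟨en x, ?_⟩
  rw [Matrix.toEuclideanLin_apply]
  simp [en, WithLp.linearEquiv_symm_apply]

lemma projMat_colSpace_mul (A : Matrix (Fin m₁) (Fin m₂) ℝ) :
    projMat (colSpace A) * A = A := by
  apply matrix_ext_mulVec
  intro x
  rw [← Matrix.mulVec_mulVec]
  apply en_injective
  rw [en_projMat]
  exact Submodule.starProjection_eq_self_iff.mpr (en_mulVec_mem_colSpace A x)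

lemma mul_projMat_rowSpace (A : Matrix (Fin m₁) (Fin m₂) ℝ) :
    A * projMat (rowSpace A) = A := by
  have h : projMat (colSpace Aᵀ) * Aᵀ = Aᵀ := projMat_colSpace_mul Aᵀ
  have h2 : rowSpace A = colSpace Aᵀ := rfl
  rw [h2]
  have := congrArg Matrix.transpose h
  rw [Matrix.transpose_mul, Matrix.transpose_transpose] at this
  rw [projMat_transpose] at this
  exact this

end Aux4
section Aux5

variable {m₁ m₂ : ℕ}

lemma mip_conj (X C : Matrix (Fin m₁) (Fin m₂) ℝ) (P : Matrix (Fin m₁) (Fin m₁) ℝ)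
    (Q : Matrix (Fin m₂) (Fin m₂) ℝ) :
    mip X (P * C * Q) = mip (Pᵀ * X * Qᵀ) C := by
  rw [mip_comm, mip_mul_right, mip_mul_left, mip_comm, Matrix.mul_assoc]

lemma spec_proj_sandwich (S₁ : Submodule ℝ (EuclideanSpace ℝ (Fin m₁)))
    (S₂ : Submodule ℝ (EuclideanSpace ℝ (Fin m₂)))
    {B₁ B₂ : Matrix (Fin m₁) (Fin m₂) ℝ} (h₁ : spec B₁ ≤ 1) (h₂ : spec B₂ ≤ 1) :
    spec (projMat S₁ * B₁ * projMat S₂ + projMat S₁ᗮ * B₂ * projMat S₂ᗮ) ≤ 1 := by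
  apply spec_le
  intro x hx
  have hBx : (projMat S₁ * B₁ * projMat S₂ + projMat S₁ᗮ * B₂ * projMat S₂ᗮ) *ᵥ x
      = (projMat S₁ *ᵥ (B₁ *ᵥ (projMat S₂ *ᵥ x)))
        + (projMat S₁ᗮ *ᵥ (B₂ *ᵥ (projMat S₂ᗮ *ᵥ x))) := by
    rw [Matrix.add_mulVec, Matrix.mulVec_mulVec, Matrix.mulVec_mulVec,
      Matrix.mulVec_mulVec, Matrix.mulVec_mulVec]
  rw [hBx]
  set u := projMat S₁ *ᵥ (B₁ *ᵥ (projMat S₂ *ᵥ x)) with hu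
  set w := projMat S₁ᗮ *ᵥ (B₂ *ᵥ (projMat S₂ᗮ *ᵥ x)) with hw
  have hmu : en u ∈ S₁ := by rw [hu]; exact en_projMat_mem S₁ _
  have hmw : en w ∈ S₁ᗮ := by rw [hw]; exact en_projMat_mem S₁ᗮ _
  have hpy := evnorm_pyth hmu hmw
  have hu2 : evnorm u ≤ evnorm (projMat S₂ *ᵥ x) := by
    calc evnorm u ≤ evnorm (B₁ *ᵥ (projMat S₂ *ᵥ x)) := evnorm_projMat_le _ _
      _ ≤ spec B₁ * evnorm (projMat S₂ *ᵥ x) := evnorm_mulVec_le _ _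
      _ ≤ 1 * evnorm (projMat S₂ *ᵥ x) :=
          mul_le_mul_of_nonneg_right h₁ (evnorm_nonneg _)
      _ = evnorm (projMat S₂ *ᵥ x) := one_mul _
  have hw2 : evnorm w ≤ evnorm (projMat S₂ᗮ *ᵥ x) := by
    calc evnorm w ≤ evnorm (B₂ *ᵥ (projMat S₂ᗮ *ᵥ x)) := evnorm_projMat_le _ _
      _ ≤ spec B₂ * evnorm (projMat S₂ᗮ *ᵥ x) := evnorm_mulVec_le _ _
      _ ≤ 1 * evnorm (projMat S₂ᗮ *ᵥ x) :=
          mul_le_mul_of_nonneg_right h₂ (evnorm_nonneg _)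
      _ = evnorm (projMat S₂ᗮ *ᵥ x) := one_mul _
  have hsplit := evnorm_proj_split S₂ x
  have hsq : evnorm (u + w) ^ 2 ≤ 1 := by
    rw [hpy]
    have e1 : evnorm u ^ 2 ≤ evnorm (projMat S₂ *ᵥ x) ^ 2 :=
      pow_le_pow_left₀ (evnorm_nonneg _) hu2 2
    have e2 : evnorm w ^ 2 ≤ evnorm (projMat S₂ᗮ *ᵥ x) ^ 2 :=
      pow_le_pow_left₀ (evnorm_nonneg _) hw2 2
    have e3 : evnorm x ^ 2 ≤ 1 := by nlinarith [evnorm_nonneg x]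
    linarith
  nlinarith [evnorm_nonneg (u + w)]

lemma nuc_split_lower (A₀ Δ : Matrix (Fin m₁) (Fin m₂) ℝ) :
    nuc A₀ + nuc (calPperp A₀ Δ) - nuc (calP A₀ Δ) ≤ nuc (A₀ + Δ) := by
  apply le_of_forall_pos_le_add
  intro ε hε
  set N := calPperp A₀ Δ with hN
  set P₁ := projMat (colSpace A₀) with hP₁
  set P₂ := projMat (rowSpace A₀) with hP₂
  set Q₁ := projMat (colSpace A₀)ᗮ with hQ₁
  set Q₂ := projMat (rowSpace A₀)ᗮ with hQ₂
  -- near-optimal dual witnesses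
  have h1 : nuc A₀ - ε/2 < nuc A₀ := by linarith
  obtain ⟨r₁, ⟨B₁, hB₁, rfl⟩, hr₁⟩ := exists_lt_of_lt_csSup (nucSet_nonempty A₀) h1
  have h2 : nuc N - ε/2 < nuc N := by linarith
  obtain ⟨r₂, ⟨B₂, hB₂, rfl⟩, hr₂⟩ := exists_lt_of_lt_csSup (nucSet_nonempty N) h2
  set B := P₁ * B₁ * P₂ + Q₁ * B₂ * Q₂ with hB
  have hspecB : spec B ≤ 1 := spec_proj_sandwich (colSpace A₀) (rowSpace A₀) hB₁ hB₂
  -- matrix identities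
  have hP₁A : P₁ * A₀ = A₀ := projMat_colSpace_mul A₀
  have hAP₂ : A₀ * P₂ = A₀ := mul_projMat_rowSpace A₀
  have hQ₁A : Q₁ * A₀ = 0 := by
    rw [hQ₁, projMat_orthogonal, Matrix.sub_mul, Matrix.one_mul, ← hP₁, hP₁A, sub_self]
  have hNQ : N = Q₁ * Δ * Q₂ := rfl
  have hQ₁N : Q₁ * N = N := by
    rw [hNQ, ← Matrix.mul_assoc, ← Matrix.mul_assoc, projMat_idem]
  have hNQ₂ : N * Q₂ = N := by
    rw [hNQ, Matrix.mul_assoc, Matrix.mul_assoc, projMat_idem, ← Matrix.mul_assoc]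
  have hP₁Q₁ : P₁ * Q₁ = 0 := by
    rw [hQ₁, projMat_orthogonal, Matrix.mul_sub, Matrix.mul_one, ← hP₁, projMat_idem, sub_self]
  have hP₁N : P₁ * N = 0 := by
    rw [hNQ, ← Matrix.mul_assoc, ← Matrix.mul_assoc, hP₁Q₁, Matrix.zero_mul, Matrix.zero_mul]
  -- transposes
  have hP₁T : P₁ᵀ = P₁ := projMat_transpose _
  have hP₂T : P₂ᵀ = P₂ := projMat_transpose _
  have hQ₁T : Q₁ᵀ = Q₁ := projMat_transpose _
  have hQ₂T : Q₂ᵀ = Q₂ := projMat_transpose _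
  -- mip computations
  have hmipA₀ : mip A₀ B = mip A₀ B₁ := by
    rw [hB, mip_add_right, mip_conj, mip_conj, hP₁T, hP₂T, hQ₁T, hQ₂T]
    rw [hP₁A, hAP₂, hQ₁A, Matrix.zero_mul, mip_zero_left, add_zero]
  have hmipN : mip N B = mip N B₂ := by
    rw [hB, mip_add_right, mip_conj, mip_conj, hP₁T, hP₂T, hQ₁T, hQ₂T]
    rw [hP₁N, Matrix.zero_mul, mip_zero_left, hQ₁N, hNQ₂, zero_add]
  have hmipP : -nuc (calP A₀ Δ) ≤ mip (calP A₀ Δ) B := neg_nuc_le_mip _ B hspecB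
  have hdecomp : A₀ + Δ = A₀ + calP A₀ Δ + N := by
    unfold N
    unfold calP
    abel
  have hfinal : mip (A₀ + Δ) B ≤ nuc (A₀ + Δ) := mip_le_nuc hspecB
  rw [hdecomp, mip_add_left, mip_add_left, hmipA₀, hmipN, ← hdecomp] at hfinal
  linarith

end Aux5
section Aux6

variable {m₁ m₂ n : ℕ} {Ω : Type*} [MeasurableSpace Ω] (μ : Measure Ω)
  (X : Fin n → Ω → Matrix (Fin m₁) (Fin m₂) ℝ)

lemma mip_mE
    (hInt : ∀ (i : Fin n) (A B : Matrix (Fin m₁) (Fin m₂) ℝ),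
      Integrable (fun ω => mip A (X i ω) * mip B (X i ω)) μ)
    (A₀ A : Matrix (Fin m₁) (Fin m₂) ℝ) (i : Fin n) :
    mip (mE μ (fun ω' => mip A₀ (X i ω') • X i ω')) A
      = ∫ ω', mip A₀ (X i ω') * mip A (X i ω') ∂μ := by
  have hent : ∀ (a : Fin m₁) (b : Fin m₂),
      Integrable (fun ω => mip A₀ (X i ω) * X i ω a b) μ := by
    intro a b
    have h := hInt i A₀ (Matrix.single a b 1)
    simpa [mip_stdBasisMatrix] using h
  have hent2 : ∀ (a : Fin m₁) (b : Fin m₂),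
      Integrable (fun ω => mip A₀ (X i ω) * X i ω a b * A a b) μ := by
    intro a b
    exact (hent a b).mul_const _
  rw [mip_eq_sum]
  have step1 : ∀ (a : Fin m₁) (b : Fin m₂),
      mE μ (fun ω' => mip A₀ (X i ω') • X i ω') a b * A a b
      = ∫ ω', mip A₀ (X i ω') * X i ω' a b * A a b ∂μ := by
    intro a b
    rw [MeasureTheory.integral_mul_const]
    rfl
  have step2 : ∫ ω', ∑ a, ∑ b, mip A₀ (X i ω') * X i ω' a b * A a b ∂μ
      = ∑ a, ∑ b, ∫ ω', mip A₀ (X i ω') * X i ω' a b * A a b ∂μ := by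
    rw [MeasureTheory.integral_finset_sum _ (fun a _ =>
      MeasureTheory.integrable_finset_sum _ (fun b _ => hent2 a b))]
    exact Finset.sum_congr rfl fun a _ =>
      MeasureTheory.integral_finset_sum _ (fun b _ => hent2 a b)
  calc ∑ a, ∑ b, mE μ (fun ω' => mip A₀ (X i ω') • X i ω') a b * A a b
      = ∑ a, ∑ b, ∫ ω', mip A₀ (X i ω') * X i ω' a b * A a b ∂μ :=
        Finset.sum_congr rfl fun a _ => Finset.sum_congr rfl fun b _ => step1 a b
    _ = ∫ ω', ∑ a, ∑ b, mip A₀ (X i ω') * X i ω' a b * A a b ∂μ := step2.symm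
    _ = ∫ ω', mip A₀ (X i ω') * mip A (X i ω') ∂μ := by
        congr 1
        funext ω'
        rw [mip_eq_sum A (X i ω'), Finset.mul_sum]
        refine Finset.sum_congr rfl fun a _ => ?_
        rw [Finset.mul_sum]
        exact Finset.sum_congr rfl fun b _ => by ring

lemma ipL2_add_right
    (hInt : ∀ (i : Fin n) (A B : Matrix (Fin m₁) (Fin m₂) ℝ),
      Integrable (fun ω => mip A (X i ω) * mip B (X i ω)) μ)
    (A B C : Matrix (Fin m₁) (Fin m₂) ℝ) :
    ipL2 μ X A (B + C) = ipL2 μ X A B + ipL2 μ X A C := by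
  unfold ipL2
  rw [← mul_add, ← Finset.sum_add_distrib]
  congr 1
  refine Finset.sum_congr rfl fun i _ => ?_
  rw [← MeasureTheory.integral_add (hInt i A B) (hInt i A C)]
  congr 1
  funext ω'
  rw [mip_add_left]
  ring

lemma nl2sq_expand
    (hInt : ∀ (i : Fin n) (A B : Matrix (Fin m₁) (Fin m₂) ℝ),
      Integrable (fun ω => mip A (X i ω) * mip B (X i ω)) μ)
    (A₀ Δ : Matrix (Fin m₁) (Fin m₂) ℝ) :
    nl2sq μ X (A₀ + Δ) = nl2sq μ X A₀ + 2 * ipL2 μ X A₀ Δ + nl2sq μ X Δ := by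
  unfold nl2sq ipL2
  have key : ∀ i : Fin n, ∫ ω, mip (A₀ + Δ) (X i ω) * mip (A₀ + Δ) (X i ω) ∂μ
      = (∫ ω, mip A₀ (X i ω) * mip A₀ (X i ω) ∂μ)
        + 2 * (∫ ω, mip A₀ (X i ω) * mip Δ (X i ω) ∂μ)
        + ∫ ω, mip Δ (X i ω) * mip Δ (X i ω) ∂μ := by
    intro i
    have h1 : (fun ω => mip (A₀ + Δ) (X i ω) * mip (A₀ + Δ) (X i ω))
        = fun ω => (mip A₀ (X i ω) * mip A₀ (X i ω)
          + 2 * (mip A₀ (X i ω) * mip Δ (X i ω)))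
          + mip Δ (X i ω) * mip Δ (X i ω) := by
      funext ω
      rw [mip_add_left]
      ring
    have hf : Integrable (fun ω => mip A₀ (X i ω) * mip A₀ (X i ω)
        + 2 * (mip A₀ (X i ω) * mip Δ (X i ω))) μ :=
      (hInt i A₀ A₀).add ((hInt i A₀ Δ).const_mul 2)
    rw [h1, MeasureTheory.integral_add hf (hInt i Δ Δ),
      MeasureTheory.integral_add (hInt i A₀ A₀) ((hInt i A₀ Δ).const_mul 2),
      MeasureTheory.integral_const_mul]
  rw [Finset.sum_congr rfl fun i _ => key i]
  rw [Finset.sum_add_distrib, Finset.sum_add_distrib, ← Finset.mul_sum]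
  ring

lemma nl2sq_nonneg (A : Matrix (Fin m₁) (Fin m₂) ℝ) : 0 ≤ nl2sq μ X A := by
  unfold nl2sq ipL2
  apply mul_nonneg (by positivity)
  apply Finset.sum_nonneg
  intro i _
  apply MeasureTheory.integral_nonneg
  intro ω
  exact mul_self_nonneg _

lemma mip_V (ξ : Fin n → Ω → ℝ) (A₀ : Matrix (Fin m₁) (Fin m₂) ℝ)
    (hInt : ∀ (i : Fin n) (A B : Matrix (Fin m₁) (Fin m₂) ℝ),
      Integrable (fun ω => mip A (X i ω) * mip B (X i ω)) μ)
    (ω : Ω) (A : Matrix (Fin m₁) (Fin m₂) ℝ) :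
    mip ((2 / (n : ℝ)) • ∑ i, Yobs X ξ A₀ i ω • X i ω) A
      = 2 * mip (M1 X ξ ω + M2 μ X A₀ ω) A + 2 * ipL2 μ X A₀ A := by
  have hL : mip ((2 / (n : ℝ)) • ∑ i, Yobs X ξ A₀ i ω • X i ω) A
      = (2 / (n : ℝ)) * ∑ i, (mip A₀ (X i ω) + ξ i ω) * mip (X i ω) A := by
    rw [mip_smul_left, mip_sum_left]
    congr 1
    exact Finset.sum_congr rfl fun i _ => by rw [mip_smul_left]; rfl
  have hM1 : mip (M1 X ξ ω) A = (1 / (n : ℝ)) * ∑ i, ξ i ω * mip (X i ω) A := by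
    unfold M1
    rw [mip_smul_left, mip_sum_left]
    congr 1
    exact Finset.sum_congr rfl fun i _ => mip_smul_left _ _ _
  have hM2 : mip (M2 μ X A₀ ω) A = (1 / (n : ℝ)) * ∑ i,
      (mip A₀ (X i ω) * mip (X i ω) A - ∫ ω', mip A₀ (X i ω') * mip A (X i ω') ∂μ) := by
    unfold M2
    rw [mip_smul_left, mip_sum_left]
    congr 1
    refine Finset.sum_congr rfl fun i _ => ?_
    rw [mip_sub_left, mip_smul_left, mip_mE μ X hInt A₀ A i]
  have hip : ipL2 μ X A₀ A = (1 / (n : ℝ)) * ∑ i,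
      ∫ ω', mip A₀ (X i ω') * mip A (X i ω') ∂μ := rfl
  rw [hL, mip_add_left, hM1, hM2, hip]
  rw [Finset.sum_congr rfl fun (i : Fin n) _ => (add_mul (mip A₀ (X i ω)) (ξ i ω)
    (mip (X i ω) A))]
  rw [Finset.sum_add_distrib, Finset.sum_sub_distrib]
  ring

end Aux6
/-- Lemma 1: on the event `λ ≥ 3‖M₁ + M₂‖_∞` the nuclear-norm penalized
estimator satisfies the cone condition
`‖𝒫_{A₀}^⊥(Â^λ - A₀)‖₁ ≤ 5 ‖𝒫_{A₀}(Â^λ - A₀)‖₁`. -/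
theorem cone_condition {m₁ m₂ n : ℕ} (hn : 0 < n)
    {Ω : Type*} [MeasurableSpace Ω] (μ : Measure Ω) [IsProbabilityMeasure μ]
    (X : Fin n → Ω → Matrix (Fin m₁) (Fin m₂) ℝ) (ξ : Fin n → Ω → ℝ)
    (hmeasX : ∀ i, Measurable (X i)) (hmeasξ : ∀ i, Measurable (ξ i))
    (hInt : ∀ (i : Fin n) (A B : Matrix (Fin m₁) (Fin m₂) ℝ),
      Integrable (fun ω => mip A (X i ω) * mip B (X i ω)) μ)
    (hξmean : ∀ i, ∫ ω, ξ i ω ∂μ = 0)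
    (A₀ : Matrix (Fin m₁) (Fin m₂) ℝ)
    (lam : ℝ) (hlam : 0 < lam)
    (Ahat : Ω → Matrix (Fin m₁) (Fin m₂) ℝ)
    (hmin : ∀ ω (A : Matrix (Fin m₁) (Fin m₂) ℝ),
      obj μ X ξ A₀ lam ω (Ahat ω) ≤ obj μ X ξ A₀ lam ω A)
    (ω : Ω) (hevent : 3 * spec (M1 X ξ ω + M2 μ X A₀ ω) ≤ lam) :
    nuc (calPperp A₀ (Ahat ω - A₀)) ≤ 5 * nuc (calP A₀ (Ahat ω - A₀)) := by
  set Δ := Ahat ω - A₀ with hΔ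
  set M := M1 X ξ ω + M2 μ X A₀ ω with hM
  set p := nuc (calPperp A₀ Δ) with hp
  set q := nuc (calP A₀ Δ) with hq
  have hAhat : Ahat ω = A₀ + Δ := by rw [hΔ]; abel
  -- the basic optimality inequality
  have hobj := hmin ω A₀
  unfold obj at hobj
  rw [mip_V μ X ξ A₀ hInt ω (Ahat ω), mip_V μ X ξ A₀ hInt ω A₀] at hobj
  rw [hAhat] at hobj
  rw [nl2sq_expand μ X hInt A₀ Δ] at hobj
  rw [ipL2_add_right μ X hInt A₀ A₀ Δ] at hobj
  rw [← hM, mip_add_right] at hobj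
  -- hobj now gives: lam * nuc (A₀ + Δ) ≤ lam * nuc A₀ + 2 * mip M Δ - nl2sq μ X Δ
  have hL2 : 0 ≤ nl2sq μ X Δ := nl2sq_nonneg μ X Δ
  have hrfl : nl2sq μ X A₀ = ipL2 μ X A₀ A₀ := rfl
  have hkey : lam * nuc (A₀ + Δ) ≤ lam * nuc A₀ + 2 * mip M Δ := by linarith
  -- bound the stochastic term
  have hMspec : spec M ≤ lam / 3 := by linarith [spec_nonneg M]
  have hnucΔ : 0 ≤ nuc Δ := nuc_nonneg Δ
  have hdual : mip M Δ ≤ (lam / 3) * nuc Δ :=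
    le_trans (mip_le_spec_mul_nuc Δ M) (mul_le_mul_of_nonneg_right hMspec hnucΔ)
  have htri : nuc Δ ≤ q + p := by
    have hdec : Δ = calP A₀ Δ + calPperp A₀ Δ := by unfold calP; abel
    calc nuc Δ = nuc (calP A₀ Δ + calPperp A₀ Δ) := by rw [← hdec]
      _ ≤ q + p := nuc_add_le _ _
  have hlow : nuc A₀ + p - q ≤ nuc (A₀ + Δ) := nuc_split_lower A₀ Δ
  -- combine
  have h1 : lam * (nuc A₀ + p - q) ≤ lam * nuc (A₀ + Δ) :=
    mul_le_mul_of_nonneg_left hlow (le_of_lt hlam)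
  have h2 : mip M Δ ≤ (lam / 3) * (q + p) := by
    calc mip M Δ ≤ (lam / 3) * nuc Δ := hdual
      _ ≤ (lam / 3) * (q + p) := by
          apply mul_le_mul_of_nonneg_left htri
          positivity
  by_contra hcon
  push_neg at hcon
  nlinarith [mul_pos hlam (show (0:ℝ) < p - 5 * q by linarith)]

end MC
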